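/- arXiv:2209.03930 — 2 statements merged into one kernel-verified Lean document; each statement's English description precedes it below -/
import Mathlib

section
/- Let G be a graph that has a partition Π_1 ∪ ⋯ ∪ Π_k of V(G) with k ≥ 2 such that for each i ∈ [k] there exists U_i ⊆ Π_i with N_G[U_i] ⊆ Π_i and such that every vertex x ∈ Π_i − U_i with N_G(x) ∩ U_i ≠ ∅ has at least two neighbors in U_i. Then k ≤ ℓ_G. -/
open SimpleGraph
open scoped Function

/-- The set of vertices eventually observed in the power domination process started
from `S`: first the closed neighborhood of `S` is observed (domination step), then
repeatedly any vertex that is the unique unobserved neighbor of an observed vertex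
becomes observed (propagation step). -/
inductive PDObserved {V : Type*} (G : SimpleGraph V) (S : Set V) : V → Prop
  | init (v : V) (hv : v ∈ S) : PDObserved G S v
  | dom (u v : V) (hu : u ∈ S) (h : G.Adj u v) : PDObserved G S v
  | force (u v : V) (hu : PDObserved G S u) (h : G.Adj u v)
      (hall : ∀ w, G.Adj u w → w ≠ v → PDObserved G S w) : PDObserved G S v

/-- `S` is a power dominating set of `G` if every vertex is eventually observed. -/
def IsPowerDominatingSet {V : Type*} (G : SimpleGraph V) (S : Set V) : Prop :=
  ∀ v, PDObserved G S v

/-- The power domination number: the minimum cardinality of a power dominating set. -/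
noncomputable def powerDominationNumber {V : Type*} (G : SimpleGraph V) : ℕ :=
  sInf {n | ∃ S : Set V, S.ncard = n ∧ IsPowerDominatingSet G S}

/-- A family `π` indexed by a type with at least two elements is a failed power
dominating partition of `G` if it is a partition of `V(G)` into nonempty parts and
for each part `π i`, the complement `V(G) - π i` is not a power dominating set. -/
def IsFailedPDPartition {V : Type*} (G : SimpleGraph V) {ι : Type*} (π : ι → Set V) : Prop :=
  2 ≤ Nat.card ι ∧ (∀ i, (π i).Nonempty) ∧ Pairwise (Disjoint on π) ∧
    (⋃ i, π i) = Set.univ ∧ ∀ i, ¬ IsPowerDominatingSet G ((π i)ᶜ)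

/-- `ℓ_G`: the maximum `k` such that `G` has a failed power dominating partition into
`k` parts, or `1` if no failed power dominating partition exists. -/
noncomputable def ellPD {V : Type*} (G : SimpleGraph V) : ℕ :=
  sSup ({1} ∪ {k | ∃ π : Fin k → Set V, IsFailedPDPartition G π})

lemma not_mem_U_of_observed {V : Type*} (G : SimpleGraph V) (P U : Set V)
    (hUP : U ⊆ P) (hNU : ∀ u ∈ U, G.neighborSet u ⊆ P)
    (h2 : ∀ x ∈ P \ U, (G.neighborSet x ∩ U).Nonempty → 2 ≤ (G.neighborSet x ∩ U).ncard)
    (hUfin : U.Finite)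
    {v : V} (hv : PDObserved G Pᶜ v) : v ∉ U := by
  induction hv with
  | init v hvS => exact fun hvU => hvS (hUP hvU)
  | dom u v huS hadj => exact fun hvU => huS (hNU v hvU (G.adj_symm hadj))
  | force u v hu hadj hall ihu ihall =>
    intro hvU
    have huP : u ∈ P := hNU v hvU (G.adj_symm hadj)
    have huU : u ∉ U := ihu
    have hne : (G.neighborSet u ∩ U).Nonempty := ⟨v, hadj, hvU⟩
    have h2' := h2 u ⟨huP, huU⟩ hne
    have hlt : 1 < (G.neighborSet u ∩ U).ncard := h2'
    obtain ⟨w, hw, hwv⟩ := Set.exists_ne_of_one_lt_ncard hlt v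
    exact ihall w hw.1 hwv hw.2

/-- Observation: Let `G` be a graph with a partition `Π_1 ∪ ⋯ ∪ Π_k` of
`V(G)`, `k ≥ 2`, such that for each `i` there exists `U_i ⊆ Π_i` with
`N_G[U_i] ⊆ Π_i`, and every `x ∈ Π_i − U_i` with `N_G(x) ∩ U_i ≠ ∅` has at least two
neighbors in `U_i`.  Then `k ≤ ℓ_G`. -/
theorem le_ellPD_of_partition {V : Type*} [Fintype V] (G : SimpleGraph V) (k : ℕ)
    (hk : 2 ≤ k) (π : Fin k → Set V)
    (hne : ∀ i, (π i).Nonempty)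
    (hdisj : Pairwise (Disjoint on π))
    (hcover : (⋃ i, π i) = Set.univ)
    (hU : ∀ i, ∃ U : Set V, U.Nonempty ∧ U ⊆ π i ∧
      (∀ u ∈ U, G.neighborSet u ⊆ π i) ∧
      (∀ x ∈ π i \ U, (G.neighborSet x ∩ U).Nonempty → 2 ≤ (G.neighborSet x ∩ U).ncard)) :
    k ≤ ellPD G := by
  have hmem : k ∈ ({1} ∪ {k | ∃ π : Fin k → Set V, IsFailedPDPartition G π} : Set ℕ) := by
    right
    refine ⟨π, ?_, hne, hdisj, hcover, ?_⟩
    · simpa using hk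
    · intro i hpd
      obtain ⟨U, hUne, hUP, hNU, h2⟩ := hU i
      obtain ⟨u, hu⟩ := hUne
      exact not_mem_U_of_observed G (π i) U hUP hNU h2 (Set.toFinite U) (hpd u) hu
  have hbdd : BddAbove ({1} ∪ {k | ∃ π : Fin k → Set V, IsFailedPDPartition G π} : Set ℕ) := by
    refine ⟨max 1 (Fintype.card V), ?_⟩
    rintro m (hm | ⟨ρ, h2, hρne, hρdisj, -, -⟩)
    · simp at hm; omega
    · refine le_max_of_le_right ?_
      have : Function.Injective (fun i : Fin m => (hρne i).choose) := by
        intro i j hij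
        by_contra hne'
        have := hρdisj hne'
        simp only at hij
        exact (Set.disjoint_left.mp this (hρne i).choose_spec)
          (hij ▸ (hρne j).choose_spec)
      simpa using Fintype.card_le_of_injective _ this
  exact le_csSup hbdd hmem
end

section
/- If G is a necklace of diamonds of order n, then ℓ_G = γ_P(G); in particular, the partition Π_1 ∪ ⋯ ∪ Π_{n/4} of V(G) in which each part Π_i induces one of the diamonds is a failed power dominating partition of G. -/
open SimpleGraph
open scoped Function

/-- The diamond graph `K_4 − e` (on `Fin 4`, with the edge `{0, 3}` missing). -/
def diamondGraph : SimpleGraph (Fin 4) :=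
  SimpleGraph.fromEdgeSet {s(0, 1), s(0, 2), s(1, 2), s(1, 3), s(2, 3)}


section Aux

lemma diamond_one_adj : ∀ j : Fin 4, j ≠ 1 → diamondGraph.Adj 1 j := by
  intro j hj
  fin_cases j <;> simp_all [diamondGraph, SimpleGraph.fromEdgeSet_adj, Sym2.eq_iff]

lemma diamond_two_adj : ∀ j : Fin 4, j ≠ 2 → diamondGraph.Adj 2 j := by
  intro j hj
  fin_cases j <;> simp_all [diamondGraph, SimpleGraph.fromEdgeSet_adj, Sym2.eq_iff]

lemma pdObserved_mono {V : Type*} {G : SimpleGraph V} {S T : Set V} (hST : S ⊆ T) {v : V}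
    (h : PDObserved G S v) : PDObserved G T v := by
  induction h with
  | init v hv => exact PDObserved.init v (hST hv)
  | dom u v hu h => exact PDObserved.dom u v (hST hu) h
  | force u v hu h hall ihu ihall =>
      exact PDObserved.force u v ihu h (fun w hw hwv => ihall w hw hwv)

/-- Structure of a diamond part in a cubic graph: the two "inner" vertices `b`, `c`
have all their neighbors inside the part, `b` dominates the part, and every
neighbor of one of them other than the other is a common neighbor. -/
lemma diamond_facts {V : Type*} [Fintype V] {G : SimpleGraph V}
    (hcubic : ∀ v : V, (G.neighborSet v).ncard = 3)
    {s : Set V} (e : G.induce s ≃g diamondGraph) :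
    ∃ b c : V, b ∈ s ∧ c ∈ s ∧ b ≠ c ∧
      (∀ v ∈ s, v = b ∨ G.Adj b v) ∧
      (∀ u, G.Adj b u → u ∈ s) ∧ (∀ u, G.Adj c u → u ∈ s) ∧
      (∀ u, G.Adj b u → u ≠ c → G.Adj c u) ∧ (∀ u, G.Adj c u → u ≠ b → G.Adj b u) := by
  classical
  set f : Fin 4 → s := fun j => e.symm j with hf
  have hfinj : Function.Injective f := fun a b hab => e.symm.injective hab
  have hadj : ∀ j j' : Fin 4, diamondGraph.Adj j j' → G.Adj (f j) (f j') := by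
    intro j j' h
    have := e.symm.map_adj_iff.mpr h
    simpa [comap_adj] using this
  have hvalinj : Function.Injective (fun j : Fin 4 => (f j : V)) := by
    intro a b hab
    exact hfinj (Subtype.coe_injective hab)
  have hnbr : ∀ j : Fin 4, (∀ j' : Fin 4, j' ≠ j → diamondGraph.Adj j j') →
      ∀ u : V, G.Adj (f j : V) u → u ∈ s := by
    intro j huniv u hu
    by_contra hus
    obtain ⟨j1, j2, j3, hne, -⟩ : ∃ j1 j2 j3 : Fin 4,
        (j1 ≠ j2 ∧ j1 ≠ j3 ∧ j2 ≠ j3 ∧ j1 ≠ j ∧ j2 ≠ j ∧ j3 ≠ j) ∧ True := by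
      fin_cases j
      · exact ⟨1, 2, 3, by simp, trivial⟩
      · exact ⟨0, 2, 3, by simp, trivial⟩
      · exact ⟨0, 1, 3, by simp, trivial⟩
      · exact ⟨0, 1, 2, by simp, trivial⟩
    obtain ⟨h12, h13, h23, h1j, h2j, h3j⟩ := hne
    set T : Set V := {(f j1 : V), (f j2 : V), (f j3 : V)} with hT
    have hTs : T ⊆ s := by
      rintro x (rfl | rfl | rfl) <;> exact Subtype.coe_prop _
    have hsub : insert u T ⊆ G.neighborSet (f j : V) := by
      rintro x (rfl | rfl | rfl | rfl)
      · exact hu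
      · exact hadj j j1 (huniv j1 h1j)
      · exact hadj j j2 (huniv j2 h2j)
      · exact hadj j j3 (huniv j3 h3j)
    have hcard : (insert u T).ncard = 4 := by
      have huT : u ∉ T := fun h => hus (hTs h)
      have h2T : (f j2 : V) ∉ ({(f j3 : V)} : Set V) := by
        simp only [Set.mem_singleton_iff]
        exact fun h => h23 (hvalinj h)
      have h1T : (f j1 : V) ∉ ({(f j2 : V), (f j3 : V)} : Set V) := by
        rintro (h | h)
        · exact h12 (hvalinj h)
        · exact h13 (hvalinj h)
      rw [Set.ncard_insert_of_notMem huT (Set.toFinite T), hT,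
        Set.ncard_insert_of_notMem h1T (Set.toFinite _),
        Set.ncard_insert_of_notMem h2T (Set.toFinite _), Set.ncard_singleton]
    have := Set.ncard_le_ncard hsub (Set.toFinite _)
    rw [hcard, hcubic] at this
    omega
  refine ⟨(f 1 : V), (f 2 : V), Subtype.coe_prop _, Subtype.coe_prop _,
    fun h => (by decide : (1 : Fin 4) ≠ 2) (hvalinj h), ?_, hnbr 1 ?_, hnbr 2 ?_, ?_, ?_⟩
  · intro v hv
    set j := e ⟨v, hv⟩ with hj
    have hfj : (f j : V) = v := by simp [hf, hj]
    by_cases h1 : j = 1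
    · left; rw [← hfj, h1]
    · right
      have := hadj 1 j (diamond_one_adj j h1)
      rwa [hfj] at this
  · intro j' hj'; exact diamond_one_adj j' hj'
  · intro j' hj'; exact diamond_two_adj j' hj'
  · intro u hu hne
    have hus : u ∈ s := hnbr 1 (fun j' hj' => diamond_one_adj j' hj') u hu
    set j := e ⟨u, hus⟩ with hj
    have hfj : (f j : V) = u := by simp [hf, hj]
    have hj1 : j ≠ 1 := by
      intro h
      have : (f 1 : V) = u := by rw [← h, hfj]
      exact G.loopless.irrefl _ (this ▸ hu)
    have hj2 : j ≠ 2 := by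
      intro h
      apply hne; rw [← hfj, h]
    have := hadj 2 j (diamond_two_adj j hj2)
    rwa [hfj] at this
  · intro u hu hne
    have hus : u ∈ s := hnbr 2 (fun j' hj' => diamond_two_adj j' hj') u hu
    set j := e ⟨u, hus⟩ with hj
    have hfj : (f j : V) = u := by simp [hf, hj]
    have hj2 : j ≠ 2 := by
      intro h
      have : (f 2 : V) = u := by rw [← h, hfj]
      exact G.loopless.irrefl _ (this ▸ hu)
    have hj1 : j ≠ 1 := by
      intro h
      apply hne; rw [← hfj, h]
    have := hadj 1 j (diamond_one_adj j hj1)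
    rwa [hfj] at this

/-- If a set `S` avoids a part whose two inner vertices have the diamond structure,
then the inner vertices are never observed. -/
lemma key_unobserved {V : Type*} {G : SimpleGraph V} {S s : Set V} {b c : V}
    (hbc : b ≠ c)
    (hbs : ∀ u, G.Adj b u → u ∈ s) (hcs : ∀ u, G.Adj c u → u ∈ s)
    (hbcadj : ∀ u, G.Adj b u → u ≠ c → G.Adj c u)
    (hcbadj : ∀ u, G.Adj c u → u ≠ b → G.Adj b u)
    (hSs : ∀ x ∈ S, x ∉ s) (hbmem : b ∈ s) (hcmem : c ∈ s) :
    ∀ v, PDObserved G S v → v ≠ b ∧ v ≠ c := by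
  intro v hv
  induction hv with
  | init v hvS =>
    constructor <;> rintro rfl
    · exact hSs _ hvS hbmem
    · exact hSs _ hvS hcmem
  | dom u v huS h =>
    constructor <;> rintro rfl
    · exact hSs _ huS (hbs u h.symm)
    · exact hSs _ huS (hcs u h.symm)
  | force u v hu h hall ihu ihall =>
    constructor <;> rintro rfl
    · have hcu : G.Adj c u := hbcadj u h.symm ihu.2
      exact (ihall c hcu.symm (Ne.symm hbc)).2 rfl
    · have hbu : G.Adj b u := hcbadj u h.symm ihu.1
      exact (ihall b hbu.symm hbc).1 rfl

end Aux

/-- If `G` is a necklace of diamonds of order `n` (a connected cubic graph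
obtained from `k ≥ 2` disjoint diamonds by adding a matching on the degree-2 vertices,
i.e. a connected cubic graph whose vertex set partitions into `k = n/4` parts each
inducing a diamond), then `ℓ_G = γ_P(G)`; in particular, the partition in which each
part induces one of the diamonds is a failed power dominating partition of `G`. -/
theorem necklace_of_diamonds_ellPD_eq {V : Type*} [Fintype V] (G : SimpleGraph V)
    (hconn : G.Connected) (hcubic : ∀ v : V, (G.neighborSet v).ncard = 3)
    (k : ℕ) (hk : 2 ≤ k) (π : Fin k → Set V)
    (hdisj : Pairwise (Disjoint on π)) (hcover : (⋃ i, π i) = Set.univ)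
    (hdiamond : ∀ i, Nonempty (G.induce (π i) ≃g diamondGraph)) :
    ellPD G = powerDominationNumber G ∧ IsFailedPDPartition G π := by
  classical
  choose b c hbmem hcmem hbc hdomv hbs hcs hbcadj hcbadj using
    fun i => diamond_facts hcubic (hdiamond i).some
  have hbinj : Function.Injective b := by
    intro i j hij
    by_contra hne
    exact (Set.disjoint_left.mp (hdisj hne)) (hbmem i) (hij ▸ hbmem j)
  have hmiss : ∀ (S : Set V) (i : Fin k), (∀ x ∈ S, x ∉ π i) →
      ¬ IsPowerDominatingSet G S := by
    intro S i hSi hPD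
    exact (key_unobserved (hbc i) (hbs i) (hcs i) (hbcadj i) (hcbadj i) hSi (hbmem i)
      (hcmem i) (b i) (hPD (b i))).1 rfl
  have hS0 : IsPowerDominatingSet G (Set.range b) := by
    intro v
    have hv : v ∈ ⋃ i, π i := hcover ▸ Set.mem_univ v
    obtain ⟨i, hi⟩ := Set.mem_iUnion.mp hv
    rcases hdomv i v hi with rfl | hadj
    · exact PDObserved.init _ ⟨i, rfl⟩
    · exact PDObserved.dom (b i) v ⟨i, rfl⟩ hadj
  have hS0card : (Set.range b).ncard = k := by
    rw [← Nat.card_coe_set_eq, Nat.card_range_of_injective hbinj,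
      Nat.card_eq_fintype_card, Fintype.card_fin]
  have hlow : ∀ S : Set V, IsPowerDominatingSet G S → k ≤ S.ncard := by
    intro S hS
    have hmeet : ∀ i, ∃ x, x ∈ S ∧ x ∈ π i := by
      intro i
      by_contra h
      push_neg at h
      exact hmiss S i h hS
    choose f hfS hfπ using hmeet
    have hfinj : Function.Injective f := by
      intro i j hij
      by_contra hne
      exact (Set.disjoint_left.mp (hdisj hne)) (hfπ i) (hij ▸ hfπ j)
    calc k = (Set.range f).ncard := by
            rw [← Nat.card_coe_set_eq, Nat.card_range_of_injective hfinj,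
              Nat.card_eq_fintype_card, Fintype.card_fin]
      _ ≤ S.ncard := Set.ncard_le_ncard (Set.range_subset_iff.mpr hfS) (Set.toFinite S)
  have hγ : powerDominationNumber G = k := by
    unfold powerDominationNumber
    apply le_antisymm
    · exact Nat.sInf_le ⟨Set.range b, hS0card, hS0⟩
    · have hne : {n | ∃ S : Set V, S.ncard = n ∧ IsPowerDominatingSet G S}.Nonempty :=
        ⟨k, Set.range b, hS0card, hS0⟩
      apply le_csInf hne
      rintro m ⟨S, rfl, hS⟩
      exact hlow S hS
  have hfailed : IsFailedPDPartition G π := by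
    refine ⟨by simpa using hk, fun i => ⟨b i, hbmem i⟩, hdisj, hcover, fun i => ?_⟩
    exact hmiss _ i (fun x hx => hx)
  have hbound : ∀ m (σ : Fin m → Set V), IsFailedPDPartition G σ → m ≤ k := by
    rintro m σ ⟨h2, hne, hdisj', hcov', hnotPD⟩
    have hmeet : ∀ j, ∃ x, x ∈ Set.range b ∧ x ∈ σ j := by
      intro j
      by_contra h
      push_neg at h
      apply hnotPD j
      intro v
      exact pdObserved_mono (fun x hx => h x hx) (hS0 v)
    choose f hfS hfσ using hmeet
    have hfinj : Function.Injective f := by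
      intro i j hij
      by_contra hne
      exact (Set.disjoint_left.mp (hdisj' hne)) (hfσ i) (hij ▸ hfσ j)
    calc m = (Set.range f).ncard := by
            rw [← Nat.card_coe_set_eq, Nat.card_range_of_injective hfinj,
              Nat.card_eq_fintype_card, Fintype.card_fin]
      _ ≤ (Set.range b).ncard := Set.ncard_le_ncard (Set.range_subset_iff.mpr hfS)
            (Set.toFinite _)
      _ = k := hS0card
  have hell : ellPD G = k := by
    have hmem : ∀ m ∈ ({1} ∪ {k | ∃ π : Fin k → Set V, IsFailedPDPartition G π} : Set ℕ),
        m ≤ k := by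
      intro m hm
      rcases hm with hm | ⟨σ, hσ⟩
      · simp only [Set.mem_singleton_iff] at hm
        omega
      · exact hbound m σ hσ
    have hkmem : k ∈ ({1} ∪ {k | ∃ π : Fin k → Set V, IsFailedPDPartition G π} : Set ℕ) :=
      Set.mem_union_right _ ⟨π, hfailed⟩
    unfold ellPD
    exact le_antisymm (csSup_le ⟨k, hkmem⟩ hmem) (le_csSup ⟨k, hmem⟩ hkmem)
  exact ⟨hell.trans hγ.symm, hfailed⟩
end
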